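/- arXiv:1308.6267 — 2 statements merged into one kernel-verified Lean document; each statement's English description precedes it below -/
import Mathlib

section
/- The trilinear operator T(f,g,h)(ξ) = ∫_{−1}^{1} ∫_{ℝ²} f(ξ+x) · conj(g(ξ+x+λx⊥)) · h(ξ+λx⊥) dx dλ is bounded from L²(ℝ²)³ to L²(ℝ²): ‖T(f,g,h)‖_{L²} ≤ C‖f‖_{L²}‖g‖_{L²}‖h‖_{L²}. -/
open MeasureTheory
open scoped ENNReal NNReal
noncomputable section

abbrev E2 := EuclideanSpace ℝ (Fin 2)

/-- Counterclockwise rotation by π/2 in the plane. -/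
def rot (z : E2) : E2 := WithLp.toLp 2 ![-(z 1), z 0]

/-- The continuous resonant (CR) trilinear operator
T(f,g,h)(ξ) = ∫_{-1}^{1} ∫_{ℝ²} f(ξ+x)·conj(g(ξ+x+λx⊥))·h(ξ+λx⊥) dx dλ. -/
def T (f g h : E2 → ℂ) (ξ : E2) : ℂ :=
  ∫ l in Set.Icc (-1 : ℝ) 1, ∫ x : E2,
    f (ξ + x) * (starRingEnd ℂ) (g (ξ + x + l • rot x)) * h (ξ + l • rot x)

lemma rot_add (x y : E2) : rot (x + y) = rot x + rot y := by
  ext i; fin_cases i <;> simp [rot, PiLp.add_apply]; ring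

lemma rot_smul (c : ℝ) (x : E2) : rot (c • x) = c • rot x := by
  ext i; fin_cases i <;> simp [rot, PiLp.smul_apply]

lemma rot_rot (x : E2) : rot (rot x) = -x := by
  ext i; fin_cases i <;> simp [rot, PiLp.neg_apply]

def rotL : E2 →ₗ[ℝ] E2 where
  toFun := rot
  map_add' := rot_add
  map_smul' := rot_smul

lemma rot_sub (x y : E2) : rot (x - y) = rot x - rot y := by
  have := map_sub rotL x y; exact this

lemma one_add_sq_pos (l : ℝ) : 0 < 1 + l^2 := by positivity

/-- x ↦ x + l • rot x as a linear equivalence. -/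
def Aeq (l : ℝ) : E2 ≃ₗ[ℝ] E2 :=
  LinearEquiv.ofLinear (LinearMap.id + l • rotL)
    ((1 + l^2)⁻¹ • (LinearMap.id - l • rotL))
    (by
      apply LinearMap.ext; intro x
      have h : ∀ y : E2, rotL y = rot y := fun _ => rfl
      simp only [LinearMap.comp_apply, LinearMap.add_apply, LinearMap.sub_apply,
        LinearMap.smul_apply, LinearMap.id_apply, LinearMap.id_coe, id_eq, h,
        rot_smul, rot_sub, rot_rot, smul_neg, smul_sub]
      match_scalars <;> field_simp
      ring)
    (by
      apply LinearMap.ext; intro x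
      have h : ∀ y : E2, rotL y = rot y := fun _ => rfl
      simp only [LinearMap.comp_apply, LinearMap.add_apply, LinearMap.sub_apply,
        LinearMap.smul_apply, LinearMap.id_apply, LinearMap.id_coe, id_eq, h,
        rot_smul, rot_add, rot_rot, smul_neg, smul_sub, smul_add]
      match_scalars <;> field_simp
      all_goals ring)

lemma Aeq_apply (l : ℝ) (x : E2) : Aeq l x = x + l • rot x := rfl

lemma det_Aeq (l : ℝ) : LinearMap.det ((Aeq l).toLinearMap) = 1 + l^2 := by
  classical
  let b : Module.Basis (Fin 2) ℝ E2 := (EuclideanSpace.basisFun (Fin 2) ℝ).toBasis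
  rw [← LinearMap.det_toMatrix b]
  rw [Matrix.det_fin_two]
  have hb : ∀ (i : Fin 2) (x : E2), b.repr x i = x i := fun i x => rfl
  have happ : ∀ i j, (LinearMap.toMatrix b b (Aeq l).toLinearMap) i j
      = (Aeq l (b j)) i := fun i j => by
    rw [LinearMap.toMatrix_apply]; exact hb _ _
  have hb0 : (b 0 : E2) = EuclideanSpace.single 0 1 := by
    simp [b, EuclideanSpace.basisFun_apply]
  have hb1 : (b 1 : E2) = EuclideanSpace.single 1 1 := by
    simp [b, EuclideanSpace.basisFun_apply]
  simp only [happ, hb0, hb1, Aeq_apply]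
  simp [rot, EuclideanSpace.single_apply]
  ring

lemma det_rotL : LinearMap.det rotL = 1 := by
  classical
  let b : Module.Basis (Fin 2) ℝ E2 := (EuclideanSpace.basisFun (Fin 2) ℝ).toBasis
  rw [← LinearMap.det_toMatrix b]
  rw [Matrix.det_fin_two]
  have hb : ∀ (i : Fin 2) (x : E2), b.repr x i = x i := fun i x => rfl
  have happ : ∀ i j, (LinearMap.toMatrix b b rotL) i j = (rot (b j)) i := fun i j => by
    rw [LinearMap.toMatrix_apply]; exact hb _ _
  have hb0 : (b 0 : E2) = EuclideanSpace.single 0 1 := by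
    simp [b, EuclideanSpace.basisFun_apply]
  have hb1 : (b 1 : E2) = EuclideanSpace.single 1 1 := by
    simp [b, EuclideanSpace.basisFun_apply]
  simp only [happ, hb0, hb1]
  simp [rot, EuclideanSpace.single_apply]

lemma det_rotL_smul (l : ℝ) : LinearMap.det (l • rotL) = l ^ 2 := by
  rw [LinearMap.det_smul, det_rotL]
  norm_num [finrank_euclideanSpace_fin]

lemma hrotc : Continuous rot := rotL.continuous_of_finiteDimensional

/-- Change of variables for a linear equivalence on `E2`, lintegral version. -/
lemma lintegral_comp_linearEquiv (e : E2 ≃ₗ[ℝ] E2) (φ : E2 → ℝ≥0∞)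
    (hd : LinearMap.det (e.toLinearMap) ≠ 0) :
    ∫⁻ x, φ (e x) = ENNReal.ofReal |(LinearMap.det e.toLinearMap)⁻¹| * ∫⁻ x, φ x := by
  have hmap : Measure.map (⇑e) (volume : Measure E2)
      = ENNReal.ofReal |(LinearMap.det e.toLinearMap)⁻¹| • volume := by
    have := Measure.map_linearMap_addHaar_eq_smul_addHaar (volume : Measure E2) hd
    simpa using this
  have em : E2 ≃ᵐ E2 := e.toContinuousLinearEquiv.toHomeomorph.toMeasurableEquiv
  have h2 := lintegral_map_equiv (μ := (volume : Measure E2)) φ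
    (e.toContinuousLinearEquiv.toHomeomorph.toMeasurableEquiv)
  have hcoe : ⇑(e.toContinuousLinearEquiv.toHomeomorph.toMeasurableEquiv) = ⇑e := rfl
  rw [hcoe] at h2
  rw [← h2, hmap, lintegral_smul_measure, smul_eq_mul]

/-- Key ≤ : composing with `x ↦ x + l • rot x + v` does not increase the lintegral. -/
lemma lintegral_comp_shear_le (l : ℝ) (v : E2) (φ : E2 → ℝ≥0∞) :
    ∫⁻ x, φ (x + l • rot x + v) ≤ ∫⁻ x, φ x := by
  have h1 : ∀ x : E2, x + l • rot x + v = (fun y => y + v) (Aeq l x) := by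
    intro x; rw [Aeq_apply]
  calc ∫⁻ x, φ (x + l • rot x + v)
      = ∫⁻ x, (fun y => φ (y + v)) (Aeq l x) := by simp only [h1]
    _ = ENNReal.ofReal |(LinearMap.det (Aeq l).toLinearMap)⁻¹| * ∫⁻ y, φ (y + v) := by
        exact lintegral_comp_linearEquiv (Aeq l) (fun y => φ (y + v))
          (by rw [det_Aeq]; exact (one_add_sq_pos l).ne')
    _ = ENNReal.ofReal |(LinearMap.det (Aeq l).toLinearMap)⁻¹| * ∫⁻ y, φ y := by
        rw [lintegral_add_right_eq_self (fun y => φ y) v]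
    _ ≤ 1 * ∫⁻ y, φ y := by
        gcongr
        rw [det_Aeq]
        apply ENNReal.ofReal_le_one.2
        rw [abs_of_pos (by positivity)]
        rw [inv_le_one_iff₀]
        right; nlinarith [sq_nonneg l]
    _ = ∫⁻ y, φ y := one_mul _

lemma hconj22 : (2:ℝ).HolderConjugate 2 := Real.HolderConjugate.two_two

lemma CS2 {α : Type*} [MeasurableSpace α] (μ : Measure α) (f g : α → ℝ≥0∞)
    (hf : AEMeasurable f μ) (hg : AEMeasurable g μ) :
    ∫⁻ a, f a * g a ∂μ ≤ (∫⁻ a, f a ^ (2:ℝ) ∂μ) ^ (1/2:ℝ) * (∫⁻ a, g a ^ (2:ℝ) ∂μ) ^ (1/2:ℝ) := by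
  have := ENNReal.lintegral_mul_le_Lp_mul_Lq μ hconj22 hf hg
  simpa using this

lemma rpow_half_sq (x : ℝ≥0∞) : (x ^ (1/2:ℝ)) ^ (2:ℝ) = x := by
  rw [← ENNReal.rpow_mul]; norm_num

lemma rpow_sq_half (x : ℝ≥0∞) : (x ^ (2:ℝ)) ^ (1/2:ℝ) = x := by
  rw [← ENNReal.rpow_mul]; norm_num

lemma rpow_two_eq_mul (x : ℝ≥0∞) : x ^ (2:ℝ) = x * x := by
  rw [show (2:ℝ) = ((2:ℕ):ℝ) by norm_num, ENNReal.rpow_natCast, sq]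

/-- the L² quantity of an `ℝ≥0∞`-valued function -/
def N2 (φ : E2 → ℝ≥0∞) : ℝ≥0∞ := (∫⁻ y, φ y ^ (2:ℝ)) ^ (1/2:ℝ)

lemma keyl (l : ℝ) {a b c F : E2 → ℝ≥0∞} (ha : Measurable a) (hb : Measurable b)
    (hc : Measurable c) (hF : Measurable F) :
    ∫⁻ ξ, F ξ * ∫⁻ x, a (ξ + x) * b (ξ + x + l • rot x) * c (ξ + l • rot x) ≤
    N2 a * N2 b * N2 c * N2 F := by
  have crot2 : Continuous fun p : E2 × E2 => l • rot p.2 :=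
    ((hrotc.comp continuous_snd).const_smul l)
  have crot1 : Continuous fun p : E2 × E2 => l • rot p.1 :=
    ((hrotc.comp continuous_fst).const_smul l)
  set Φ : E2 → E2 → ℝ≥0∞ := fun ξ u =>
    F ξ * (a u * b (u + l • rot u - l • rot ξ) * c (ξ - l • rot ξ + l • rot u)) with hΦdef
  have hbm : Measurable fun p : E2 × E2 => b (p.2 + l • rot p.2 - l • rot p.1) := by
    have hco : Continuous fun p : E2 × E2 => p.2 + l • rot p.2 - l • rot p.1 :=
      (continuous_snd.add crot2).sub crot1
    exact hb.comp hco.measurable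
  have hcm : Measurable fun p : E2 × E2 => c (p.1 - l • rot p.1 + l • rot p.2) := by
    have hco : Continuous fun p : E2 × E2 => p.1 - l • rot p.1 + l • rot p.2 :=
      (continuous_fst.sub crot1).add crot2
    exact hc.comp hco.measurable
  have hΦm : Measurable (Function.uncurry Φ) :=
    (hF.comp measurable_fst).mul (((ha.comp measurable_snd).mul hbm).mul hcm)
  have step1 : ∫⁻ ξ, F ξ * ∫⁻ x, a (ξ + x) * b (ξ + x + l • rot x) * c (ξ + l • rot x)
      = ∫⁻ ξ, ∫⁻ u, Φ ξ u := by
    apply lintegral_congr; intro ξ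
    have hm1 : Measurable fun x : E2 => a (ξ + x) * b (ξ + x + l • rot x) * c (ξ + l • rot x) := by
      have c1 : Continuous fun x : E2 => ξ + x := continuous_const.add continuous_id
      have cr : Continuous fun x : E2 => l • rot x := hrotc.const_smul l
      have c2 : Continuous fun x : E2 => ξ + x + l • rot x := c1.add cr
      have c3 : Continuous fun x : E2 => ξ + l • rot x := continuous_const.add cr
      exact ((ha.comp c1.measurable).mul (hb.comp c2.measurable)).mul (hc.comp c3.measurable)
    rw [← lintegral_const_mul (F ξ) hm1]
    rw [← lintegral_add_left_eq_self (fun u => Φ ξ u) ξ]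
    apply lintegral_congr; intro x
    have harg1 : (ξ + x) + l • rot (ξ + x) - l • rot ξ = ξ + x + l • rot x := by
      rw [rot_add, smul_add]; abel
    have harg2 : ξ - l • rot ξ + l • rot (ξ + x) = ξ + l • rot x := by
      rw [rot_add, smul_add]; abel
    simp only [hΦdef, harg1, harg2]
  rw [step1]
  have step2 : ∫⁻ ξ, ∫⁻ u, Φ ξ u = ∫⁻ u, ∫⁻ ξ, Φ ξ u :=
    lintegral_lintegral_swap hΦm.aemeasurable
  rw [step2]
  set Ib : ℝ≥0∞ := ∫⁻ y, b y ^ (2:ℝ) with hIb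
  set Ic : ℝ≥0∞ := ∫⁻ y, c y ^ (2:ℝ) with hIc
  set IF : ℝ≥0∞ := ∫⁻ y, F y ^ (2:ℝ) with hIF
  set G : E2 → ℝ≥0∞ := fun u => ∫⁻ ξ, (F ξ * b (u + l • rot u - l • rot ξ)) ^ (2:ℝ) with hG
  have hGint : Measurable fun p : E2 × E2 => (F p.2 * b (p.1 + l • rot p.1 - l • rot p.2)) ^ (2:ℝ) := by
    have hco : Continuous fun p : E2 × E2 => p.1 + l • rot p.1 - l • rot p.2 :=
      (continuous_fst.add crot1).sub crot2
    exact ((hF.comp measurable_snd).mul (hb.comp hco.measurable)).pow measurable_const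
  have hGm : Measurable G := Measurable.lintegral_prod_right' hGint
  have step3 : ∀ u, ∫⁻ ξ, Φ ξ u ≤ (G u) ^ (1/2:ℝ) * (a u * Ic ^ (1/2:ℝ)) := by
    intro u
    have hgb : Continuous fun ξ : E2 => u + l • rot u - l • rot ξ :=
      continuous_const.sub (hrotc.const_smul l)
    have hmb : Measurable fun ξ : E2 => F ξ * b (u + l • rot u - l • rot ξ) :=
      hF.mul (hb.comp hgb.measurable)
    have hgc : Continuous fun ξ : E2 => ξ - l • rot ξ + l • rot u :=
      (continuous_id.sub (hrotc.const_smul l)).add continuous_const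
    have hmc : Measurable fun ξ : E2 => a u * c (ξ - l • rot ξ + l • rot u) :=
      measurable_const.mul (hc.comp hgc.measurable)
    have hmc2 : Measurable fun ξ : E2 => c (ξ - l • rot ξ + l • rot u) ^ (2:ℝ) :=
      (hc.comp hgc.measurable).pow measurable_const
    calc ∫⁻ ξ, Φ ξ u
        = ∫⁻ ξ, (F ξ * b (u + l • rot u - l • rot ξ)) * (a u * c (ξ - l • rot ξ + l • rot u)) := by
          apply lintegral_congr; intro ξ; simp only [hΦdef]; ring
      _ ≤ (∫⁻ ξ, (F ξ * b (u + l • rot u - l • rot ξ)) ^ (2:ℝ)) ^ (1/2:ℝ)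
          * (∫⁻ ξ, (a u * c (ξ - l • rot ξ + l • rot u)) ^ (2:ℝ)) ^ (1/2:ℝ) :=
          CS2 volume _ _ hmb.aemeasurable hmc.aemeasurable
      _ ≤ (G u) ^ (1/2:ℝ) * (a u * Ic ^ (1/2:ℝ)) := by
          apply mul_le_mul' le_rfl
          have h1 : ∫⁻ ξ, (a u * c (ξ - l • rot ξ + l • rot u)) ^ (2:ℝ)
              = (a u) ^ (2:ℝ) * ∫⁻ ξ, c (ξ - l • rot ξ + l • rot u) ^ (2:ℝ) := by
            simp_rw [ENNReal.mul_rpow_of_nonneg _ _ (by norm_num : (0:ℝ) ≤ 2)]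
            exact lintegral_const_mul _ hmc2
          have h2 : ∫⁻ ξ, c (ξ - l • rot ξ + l • rot u) ^ (2:ℝ) ≤ Ic := by
            have harg : ∀ ξ : E2, ξ - l • rot ξ + l • rot u = ξ + (-l) • rot ξ + l • rot u := by
              intro ξ; rw [neg_smul]; abel
            simp_rw [harg]
            exact lintegral_comp_shear_le (-l) (l • rot u) (fun y => c y ^ (2:ℝ))
          calc (∫⁻ ξ, (a u * c (ξ - l • rot ξ + l • rot u)) ^ (2:ℝ)) ^ (1/2:ℝ)
              ≤ ((a u) ^ (2:ℝ) * Ic) ^ (1/2:ℝ) := by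
                apply ENNReal.rpow_le_rpow _ (by norm_num)
                rw [h1]; exact mul_le_mul' le_rfl h2
            _ = a u * Ic ^ (1/2:ℝ) := by
                rw [ENNReal.mul_rpow_of_nonneg _ _ (by norm_num : (0:ℝ) ≤ 1/2), rpow_sq_half]
  calc ∫⁻ u, ∫⁻ ξ, Φ ξ u
      ≤ ∫⁻ u, (G u) ^ (1/2:ℝ) * (a u * Ic ^ (1/2:ℝ)) := lintegral_mono step3
    _ = Ic ^ (1/2:ℝ) * ∫⁻ u, a u * (G u) ^ (1/2:ℝ) := by
        rw [← lintegral_const_mul (f := fun u => a u * G u ^ (1/2:ℝ)) _ (ha.mul (hGm.pow_const _))]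
        apply lintegral_congr; intro u; ring
    _ ≤ Ic ^ (1/2:ℝ) * ((∫⁻ u, a u ^ (2:ℝ)) ^ (1/2:ℝ)
          * (∫⁻ u, ((G u) ^ (1/2:ℝ)) ^ (2:ℝ)) ^ (1/2:ℝ)) := by
        apply mul_le_mul' le_rfl
        exact CS2 volume _ _ ha.aemeasurable ((hGm.pow_const _).aemeasurable)
    _ ≤ Ic ^ (1/2:ℝ) * ((∫⁻ u, a u ^ (2:ℝ)) ^ (1/2:ℝ) * (IF * Ib) ^ (1/2:ℝ)) := by
        apply mul_le_mul' le_rfl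
        apply mul_le_mul' le_rfl
        apply ENNReal.rpow_le_rpow _ (by norm_num)
        simp_rw [rpow_half_sq]
        have hsw : ∫⁻ u, G u = ∫⁻ ξ, ∫⁻ u, (F ξ * b (u + l • rot u - l • rot ξ)) ^ (2:ℝ) :=
          lintegral_lintegral_swap hGint.aemeasurable
        rw [hsw]
        calc ∫⁻ ξ, ∫⁻ u, (F ξ * b (u + l • rot u - l • rot ξ)) ^ (2:ℝ)
            ≤ ∫⁻ ξ, F ξ ^ (2:ℝ) * Ib := by
              apply lintegral_mono; intro ξ
              have hgb2 : Continuous fun u : E2 => u + l • rot u - l • rot ξ :=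
                (continuous_id.add (hrotc.const_smul l)).sub continuous_const
              have hmb2 : Measurable fun u : E2 => b (u + l • rot u - l • rot ξ) ^ (2:ℝ) :=
                (hb.comp hgb2.measurable).pow measurable_const
              have hexp : ∀ u : E2, (F ξ * b (u + l • rot u - l • rot ξ)) ^ (2:ℝ)
                  = F ξ ^ (2:ℝ) * b (u + l • rot u - l • rot ξ) ^ (2:ℝ) := fun u =>
                ENNReal.mul_rpow_of_nonneg _ _ (by norm_num)
              simp_rw [hexp]
              rw [lintegral_const_mul _ hmb2]
              apply mul_le_mul' le_rfl
              have harg : ∀ u : E2, u + l • rot u - l • rot ξ = u + l • rot u + (-(l • rot ξ)) := by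
                intro u; abel
              simp_rw [harg]
              exact lintegral_comp_shear_le l (-(l • rot ξ)) (fun y => b y ^ (2:ℝ))
          _ = IF * Ib := lintegral_mul_const _ (hF.pow measurable_const)
    _ = N2 a * N2 b * N2 c * N2 F := by
        simp only [N2, ENNReal.mul_rpow_of_nonneg _ _ (by norm_num : (0:ℝ) ≤ 1/2), ← hIb, ← hIc, ← hIF]
        ring

/-- joint measurability of the trilinear integrand -/
lemma trimeas {a b c : E2 → ℝ≥0∞} (ha : Measurable a) (hb : Measurable b) (hc : Measurable c) :
    Measurable fun q : (E2 × ℝ) × E2 =>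
      a (q.1.1 + q.2) * b (q.1.1 + q.2 + q.1.2 • rot q.2) * c (q.1.1 + q.1.2 • rot q.2) := by
  have c0 : Continuous fun q : (E2 × ℝ) × E2 => q.1.2 • rot q.2 :=
    (continuous_fst.snd).smul (hrotc.comp continuous_snd)
  have c1 : Continuous fun q : (E2 × ℝ) × E2 => q.1.1 + q.2 :=
    (continuous_fst.fst).add continuous_snd
  have c2 : Continuous fun q : (E2 × ℝ) × E2 => q.1.1 + q.2 + q.1.2 • rot q.2 := c1.add c0
  have c3 : Continuous fun q : (E2 × ℝ) × E2 => q.1.1 + q.1.2 • rot q.2 :=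
    (continuous_fst.fst).add c0
  exact ((ha.comp c1.measurable).mul (hb.comp c2.measurable)).mul (hc.comp c3.measurable)

/-- measurability of the inner integral as a function of `(ξ, l)` -/
lemma Wmeas {a b c : E2 → ℝ≥0∞} (ha : Measurable a) (hb : Measurable b) (hc : Measurable c) :
    Measurable fun p : E2 × ℝ =>
      ∫⁻ x, a (p.1 + x) * b (p.1 + x + p.2 • rot x) * c (p.1 + p.2 • rot x) :=
  Measurable.lintegral_prod_right' (trimeas ha hb hc)

lemma key {a b c F : E2 → ℝ≥0∞} (ha : Measurable a) (hb : Measurable b)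
    (hc : Measurable c) (hF : Measurable F) :
    ∫⁻ ξ, F ξ * ∫⁻ l in Set.Icc (-1:ℝ) 1,
        ∫⁻ x, a (ξ + x) * b (ξ + x + l • rot x) * c (ξ + l • rot x) ≤
    2 * (N2 a * N2 b * N2 c) * N2 F := by
  set W : E2 → ℝ → ℝ≥0∞ := fun ξ l =>
    ∫⁻ x, a (ξ + x) * b (ξ + x + l • rot x) * c (ξ + l • rot x) with hW
  have hWm : Measurable fun p : E2 × ℝ => W p.1 p.2 := Wmeas ha hb hc
  have step1 : ∫⁻ ξ, F ξ * ∫⁻ l in Set.Icc (-1:ℝ) 1, W ξ l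
      = ∫⁻ ξ, ∫⁻ l in Set.Icc (-1:ℝ) 1, F ξ * W ξ l := by
    apply lintegral_congr; intro ξ
    exact (lintegral_const_mul (F ξ) (hWm.comp (measurable_prodMk_left))).symm
  rw [step1]
  have step2 : ∫⁻ ξ, ∫⁻ l in Set.Icc (-1:ℝ) 1, F ξ * W ξ l
      = ∫⁻ l in Set.Icc (-1:ℝ) 1, ∫⁻ ξ, F ξ * W ξ l := by
    apply lintegral_lintegral_swap
    exact ((hF.comp measurable_fst).mul hWm).aemeasurable
  rw [step2]
  calc ∫⁻ l in Set.Icc (-1:ℝ) 1, ∫⁻ ξ, F ξ * W ξ l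
      ≤ ∫⁻ _ in Set.Icc (-1:ℝ) 1, (N2 a * N2 b * N2 c * N2 F) :=
        lintegral_mono fun l => keyl l ha hb hc hF
    _ = (N2 a * N2 b * N2 c * N2 F) * volume (Set.Icc (-1:ℝ) 1) := setLIntegral_const _ _
    _ = 2 * (N2 a * N2 b * N2 c) * N2 F := by
        rw [Real.volume_Icc]
        norm_num
        ring

lemma preimage_null_shear (l : ℝ) (ξ : E2) {N : Set E2} (hN : volume N = 0) :
    volume {x : E2 | ξ + x + l • rot x ∈ N} = 0 := by
  have hset : {x : E2 | ξ + x + l • rot x ∈ N}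
      = (⇑((Aeq l).toLinearMap)) ⁻¹' ((fun y => ξ + y) ⁻¹' N) := by
    ext x
    simp only [Set.mem_setOf_eq, Set.mem_preimage, LinearEquiv.coe_coe, Aeq_apply]
    rw [add_assoc]
  rw [hset, Measure.addHaar_preimage_linearMap volume
    (by rw [det_Aeq]; exact (one_add_sq_pos l).ne')]
  rw [measure_preimage_add, hN, mul_zero]

lemma preimage_null_rot (l : ℝ) (hl : l ≠ 0) (ξ : E2) {N : Set E2} (hN : volume N = 0) :
    volume {x : E2 | ξ + l • rot x ∈ N} = 0 := by
  have hset : {x : E2 | ξ + l • rot x ∈ N}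
      = (⇑(l • rotL)) ⁻¹' ((fun y => ξ + y) ⁻¹' N) := by
    ext x
    simp only [Set.mem_setOf_eq, Set.mem_preimage, LinearMap.smul_apply]
    rfl
  rw [hset, Measure.addHaar_preimage_linearMap volume
    (by rw [det_rotL_smul]; exact pow_ne_zero 2 hl)]
  rw [measure_preimage_add, hN, mul_zero]

lemma psi_congr {a a' b b' c c' : E2 → ℝ≥0∞} (ha : a =ᵐ[volume] a') (hb : b =ᵐ[volume] b')
    (hc : c =ᵐ[volume] c') (ξ : E2) :
    ∫⁻ l in Set.Icc (-1:ℝ) 1, ∫⁻ x, a (ξ + x) * b (ξ + x + l • rot x) * c (ξ + l • rot x)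
    = ∫⁻ l in Set.Icc (-1:ℝ) 1,
        ∫⁻ x, a' (ξ + x) * b' (ξ + x + l • rot x) * c' (ξ + l • rot x) := by
  set Na := toMeasurable volume {y | a y ≠ a' y} with hNa
  set Nb := toMeasurable volume {y | b y ≠ b' y} with hNb
  set Nc := toMeasurable volume {y | c y ≠ c' y} with hNc
  have hNa0 : volume Na = 0 := by rw [hNa, measure_toMeasurable]; exact ae_iff.1 ha
  have hNb0 : volume Nb = 0 := by rw [hNb, measure_toMeasurable]; exact ae_iff.1 hb
  have hNc0 : volume Nc = 0 := by rw [hNc, measure_toMeasurable]; exact ae_iff.1 hc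
  apply lintegral_congr_ae
  have hl : ∀ᵐ l ∂(volume.restrict (Set.Icc (-1:ℝ) 1)), l ≠ 0 := by
    apply ae_restrict_of_ae
    rw [ae_iff]
    have : {l : ℝ | ¬ l ≠ 0} = {0} := by ext l; simp
    rw [this, Real.volume_singleton]
  filter_upwards [hl] with l hl0
  apply lintegral_congr_ae
  have A1 : ∀ᵐ x : E2, ξ + x ∉ Na := by
    rw [ae_iff]
    have : {x : E2 | ¬ ξ + x ∉ Na} = (fun x => ξ + x) ⁻¹' Na := by ext x; simp [Set.mem_preimage]
    rw [this, measure_preimage_add, hNa0]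
  have A2 : ∀ᵐ x : E2, ξ + x + l • rot x ∉ Nb := by
    rw [ae_iff]
    have : {x : E2 | ¬ ξ + x + l • rot x ∉ Nb} = {x : E2 | ξ + x + l • rot x ∈ Nb} := by
      ext x; simp
    rw [this]
    exact preimage_null_shear l ξ hNb0
  have A3 : ∀ᵐ x : E2, ξ + l • rot x ∉ Nc := by
    rw [ae_iff]
    have : {x : E2 | ¬ ξ + l • rot x ∉ Nc} = {x : E2 | ξ + l • rot x ∈ Nc} := by ext x; simp
    rw [this]
    exact preimage_null_rot l hl0 ξ hNc0
  filter_upwards [A1, A2, A3] with x h1 h2 h3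
  have e1 : a (ξ + x) = a' (ξ + x) := by
    by_contra hne; exact h1 (subset_toMeasurable _ _ hne)
  have e2 : b (ξ + x + l • rot x) = b' (ξ + x + l • rot x) := by
    by_contra hne; exact h2 (subset_toMeasurable _ _ hne)
  have e3 : c (ξ + l • rot x) = c' (ξ + l • rot x) := by
    by_contra hne; exact h3 (subset_toMeasurable _ _ hne)
  rw [e1, e2, e3]

lemma aux_cancel (L P : ℝ≥0∞) (hL : L ≠ ⊤) (h : L ≤ P * L ^ (1/2:ℝ)) : L ≤ P ^ (2:ℝ) := by
  by_cases hL0 : L = 0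
  · simp [hL0]
  · have h0 : L ^ (1/2:ℝ) ≠ 0 := by
      simp [ENNReal.rpow_eq_zero_iff, hL0, hL]
    have ht : L ^ (1/2:ℝ) ≠ ⊤ := by
      refine ENNReal.rpow_ne_top_of_nonneg (by norm_num) hL
    have hmul : L ^ (1/2:ℝ) * L ^ (1/2:ℝ) = L := by
      rw [← ENNReal.rpow_add _ _ hL0 hL]; norm_num
    have : L ^ (1/2:ℝ) * L ^ (1/2:ℝ) ≤ P * L ^ (1/2:ℝ) := by rw [hmul]; exact h
    have hle : L ^ (1/2:ℝ) ≤ P := by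
      exact (ENNReal.mul_le_mul_iff_left h0 ht).1 this
    calc L = (L ^ (1/2:ℝ)) ^ (2:ℝ) := (rpow_half_sq L).symm
      _ ≤ P ^ (2:ℝ) := ENNReal.rpow_le_rpow hle (by norm_num)

/-- The CR trilinear operator is bounded from (L²)³ to L². -/
theorem stmt10 :
    ∃ C : ℝ, 0 < C ∧ ∀ f g h : E2 → ℂ,
      MemLp f 2 volume → MemLp g 2 volume → MemLp h 2 volume →
      eLpNorm (T f g h) 2 volume ≤
        ENNReal.ofReal C * eLpNorm f 2 volume * eLpNorm g 2 volume * eLpNorm h 2 volume := by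
  refine ⟨2, by norm_num, fun f g h hf hg hh => ?_⟩
  -- measurable representatives
  set f' := hf.1.mk f with hf'def
  set g' := hg.1.mk g with hg'def
  set h' := hh.1.mk h with hh'def
  have hfe : f =ᵐ[volume] f' := hf.1.ae_eq_mk
  have hge : g =ᵐ[volume] g' := hg.1.ae_eq_mk
  have hhe : h =ᵐ[volume] h' := hh.1.ae_eq_mk
  set a : E2 → ℝ≥0∞ := fun y => (‖f' y‖₊ : ℝ≥0∞) with hadef
  set b : E2 → ℝ≥0∞ := fun y => (‖g' y‖₊ : ℝ≥0∞) with hbdef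
  set c : E2 → ℝ≥0∞ := fun y => (‖h' y‖₊ : ℝ≥0∞) with hcdef
  have ha : Measurable a := hf.1.stronglyMeasurable_mk.measurable.nnnorm.coe_nnreal_ennreal
  have hb : Measurable b := hg.1.stronglyMeasurable_mk.measurable.nnnorm.coe_nnreal_ennreal
  have hc : Measurable c := hh.1.stronglyMeasurable_mk.measurable.nnnorm.coe_nnreal_ennreal
  set Ψ : E2 → ℝ≥0∞ := fun ξ => ∫⁻ l in Set.Icc (-1:ℝ) 1,
      ∫⁻ x, a (ξ + x) * b (ξ + x + l • rot x) * c (ξ + l • rot x) with hΨdef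
  have hΨm : Measurable Ψ := Measurable.lintegral_prod_right' (Wmeas ha hb hc)
  -- pointwise bound
  have hpt : ∀ ξ, (‖T f g h ξ‖₊ : ℝ≥0∞) ≤ Ψ ξ := by
    intro ξ
    have heq : Ψ ξ = ∫⁻ l in Set.Icc (-1:ℝ) 1,
        ∫⁻ x, (‖f (ξ + x)‖₊ : ℝ≥0∞) * (‖g (ξ + x + l • rot x)‖₊ : ℝ≥0∞)
          * (‖h (ξ + l • rot x)‖₊ : ℝ≥0∞) := by
      have := psi_congr (a := fun y => (‖f y‖₊ : ℝ≥0∞)) (a' := a)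
        (b := fun y => (‖g y‖₊ : ℝ≥0∞)) (b' := b)
        (c := fun y => (‖h y‖₊ : ℝ≥0∞)) (c' := c)
        (hfe.mono fun y hy => by simp [hadef, hy])
        (hge.mono fun y hy => by simp [hbdef, hy])
        (hhe.mono fun y hy => by simp [hcdef, hy]) ξ
      exact this.symm
    rw [heq]
    calc (‖T f g h ξ‖₊ : ℝ≥0∞)
        ≤ ∫⁻ l in Set.Icc (-1:ℝ) 1, ‖∫ x : E2, f (ξ + x)
            * (starRingEnd ℂ) (g (ξ + x + l • rot x)) * h (ξ + l • rot x)‖₊ :=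
          enorm_integral_le_lintegral_enorm _
      _ ≤ ∫⁻ l in Set.Icc (-1:ℝ) 1, ∫⁻ x, (‖f (ξ + x)
            * (starRingEnd ℂ) (g (ξ + x + l • rot x)) * h (ξ + l • rot x)‖₊ : ℝ≥0∞) :=
          lintegral_mono fun l => enorm_integral_le_lintegral_enorm _
      _ = ∫⁻ l in Set.Icc (-1:ℝ) 1, ∫⁻ x, (‖f (ξ + x)‖₊ : ℝ≥0∞)
            * (‖g (ξ + x + l • rot x)‖₊ : ℝ≥0∞) * (‖h (ξ + l • rot x)‖₊ : ℝ≥0∞) := by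
          apply lintegral_congr; intro l
          apply lintegral_congr; intro x
          rw [nnnorm_mul, nnnorm_mul, RCLike.nnnorm_conj]
          push_cast
          ring
  -- the square-integral bound via truncations
  set P : ℝ≥0∞ := 2 * (N2 a * N2 b * N2 c) with hPdef
  set F : ℕ → E2 → ℝ≥0∞ := fun n ξ =>
    min (Ψ ξ) n * (Metric.closedBall (0:E2) n).indicator (fun _ => 1) ξ with hFdef
  have hFm : ∀ n, Measurable (F n) :=
    fun n => (hΨm.min measurable_const).mul (measurable_const.indicator measurableSet_closedBall)
  have hind_le_one : ∀ (n : ℕ) (ξ : E2),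
      (Metric.closedBall (0:E2) n).indicator (fun _ => (1:ℝ≥0∞)) ξ ≤ 1 := by
    intro n ξ
    by_cases hmem : ξ ∈ Metric.closedBall (0:E2) (n:ℝ) <;>
      simp [Set.indicator_apply, hmem]
  have hFle : ∀ n ξ, F n ξ ≤ Ψ ξ := fun n ξ => by
    calc F n ξ ≤ min (Ψ ξ) n * 1 := mul_le_mul' le_rfl (hind_le_one n ξ)
      _ = min (Ψ ξ) n := mul_one _
      _ ≤ Ψ ξ := min_le_left _ _
  have hFfin : ∀ n, ∫⁻ ξ, F n ξ ^ (2:ℝ) ≠ ⊤ := by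
    intro n
    have hle : ∀ ξ, F n ξ ^ (2:ℝ)
        ≤ (Metric.closedBall (0:E2) n).indicator (fun _ => ((n:ℝ≥0∞)) ^ (2:ℝ)) ξ := by
      intro ξ
      by_cases hmem : ξ ∈ Metric.closedBall (0:E2) (n:ℝ)
      · simp only [Set.indicator_of_mem hmem]
        apply ENNReal.rpow_le_rpow _ (by norm_num)
        calc F n ξ ≤ min (Ψ ξ) n * 1 := mul_le_mul' le_rfl (hind_le_one n ξ)
          _ = min (Ψ ξ) n := mul_one _
          _ ≤ n := min_le_right _ _
      · simp only [Set.indicator_of_notMem hmem, hFdef]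
        rw [mul_zero, ENNReal.zero_rpow_of_pos (by norm_num)]
    have : ∫⁻ ξ, F n ξ ^ (2:ℝ)
        ≤ ((n:ℝ≥0∞)) ^ (2:ℝ) * volume (Metric.closedBall (0:E2) n) := by
      calc ∫⁻ ξ, F n ξ ^ (2:ℝ)
          ≤ ∫⁻ ξ, (Metric.closedBall (0:E2) n).indicator (fun _ => ((n:ℝ≥0∞)) ^ (2:ℝ)) ξ :=
            lintegral_mono hle
        _ = ((n:ℝ≥0∞)) ^ (2:ℝ) * volume (Metric.closedBall (0:E2) n) := by
            rw [lintegral_indicator measurableSet_closedBall, setLIntegral_const]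
    refine ne_top_of_le_ne_top ?_ this
    exact (ENNReal.mul_lt_top
      (ENNReal.rpow_lt_top_of_nonneg (by norm_num) (ENNReal.natCast_ne_top n))
      (measure_closedBall_lt_top)).ne
  have hln : ∀ n, ∫⁻ ξ, F n ξ ^ (2:ℝ) ≤ P ^ (2:ℝ) := by
    intro n
    apply aux_cancel _ _ (hFfin n)
    calc ∫⁻ ξ, F n ξ ^ (2:ℝ) ≤ ∫⁻ ξ, F n ξ * Ψ ξ :=
          lintegral_mono fun ξ => le_trans (le_of_eq (rpow_two_eq_mul _))
            (mul_le_mul' le_rfl (hFle n ξ))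
      _ ≤ 2 * (N2 a * N2 b * N2 c) * N2 (F n) := key ha hb hc (hFm n)
      _ = P * (∫⁻ ξ, F n ξ ^ (2:ℝ)) ^ (1/2:ℝ) := by rw [hPdef]; rfl
  -- monotone convergence
  have hmono : ∀ ⦃m n : ℕ⦄, m ≤ n → ∀ ξ, F m ξ ≤ F n ξ := by
    intro m n hmn ξ
    apply mul_le_mul'
    · exact min_le_min le_rfl (Nat.cast_le.2 hmn)
    · exact Set.indicator_le_indicator_of_subset
        (Metric.closedBall_subset_closedBall (Nat.cast_le.2 hmn)) (fun _ => zero_le) ξ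
  have hsup : ∀ ξ, ⨆ n, F n ξ = Ψ ξ := by
    intro ξ
    apply le_antisymm (iSup_le fun n => hFle n ξ)
    have hmem : ∀ n : ℕ, ‖ξ‖ ≤ n → ξ ∈ Metric.closedBall (0:E2) (n:ℝ) := by
      intro n hn; rw [Metric.mem_closedBall, dist_zero_right]; exact hn
    rcases eq_or_ne (Ψ ξ) ⊤ with htop | hfin
    · rw [htop]
      have hstep : ∀ m : ℕ, (m:ℝ≥0∞) ≤ ⨆ n, F n ξ := by
        intro m
        set n := max m ⌈‖ξ‖⌉₊ with hn
        apply le_iSup_of_le n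
        have h1 : min (Ψ ξ) (n:ℝ≥0∞) = (n:ℝ≥0∞) := by rw [htop]; exact min_eq_right le_top
        have h2 : ξ ∈ Metric.closedBall (0:E2) (n:ℝ) := by
          apply hmem
          calc ‖ξ‖ ≤ (⌈‖ξ‖⌉₊ : ℝ) := Nat.le_ceil _
            _ ≤ n := Nat.cast_le.2 (le_max_right _ _)
        rw [hFdef]
        simp only [Set.indicator_of_mem h2, mul_one, h1]
        exact_mod_cast Nat.cast_le.2 (le_max_left m _)
      calc (⊤:ℝ≥0∞) = ⨆ m : ℕ, (m:ℝ≥0∞) := ENNReal.iSup_natCast.symm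
        _ ≤ ⨆ n, F n ξ := iSup_le hstep
    · obtain ⟨m, hm⟩ := ENNReal.exists_nat_gt hfin
      set n := max m ⌈‖ξ‖⌉₊ with hn
      apply le_iSup_of_le n
      have h1 : min (Ψ ξ) (n:ℝ≥0∞) = Ψ ξ := by
        apply min_eq_left
        calc Ψ ξ ≤ m := hm.le
          _ ≤ (n:ℝ≥0∞) := Nat.cast_le.2 (le_max_left _ _)
      have h2 : ξ ∈ Metric.closedBall (0:E2) (n:ℝ) := by
        apply hmem
        calc ‖ξ‖ ≤ (⌈‖ξ‖⌉₊ : ℝ) := Nat.le_ceil _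
          _ ≤ n := Nat.cast_le.2 (le_max_right _ _)
      rw [hFdef]
      simp only [Set.indicator_of_mem h2, mul_one, h1]
      exact le_rfl
  have hsup2 : ∀ ξ, ⨆ n, (F n ξ) ^ (2:ℝ) = (Ψ ξ) ^ (2:ℝ) := by
    intro ξ
    rw [← hsup ξ]
    apply le_antisymm
    · exact iSup_le fun n => ENNReal.rpow_le_rpow (le_iSup (fun n => F n ξ) n) (by norm_num)
    · rw [rpow_two_eq_mul, ENNReal.iSup_mul]
      apply iSup_le; intro i
      rw [ENNReal.mul_iSup]
      apply iSup_le; intro j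
      calc F i ξ * F j ξ ≤ F (max i j) ξ * F (max i j) ξ :=
            mul_le_mul' (hmono (le_max_left i j) ξ) (hmono (le_max_right i j) ξ)
        _ = F (max i j) ξ ^ (2:ℝ) := (rpow_two_eq_mul _).symm
        _ ≤ ⨆ n, (F n ξ) ^ (2:ℝ) := le_iSup (fun n => F n ξ ^ (2:ℝ)) _
  have hMCT : ∫⁻ ξ, Ψ ξ ^ (2:ℝ) ≤ P ^ (2:ℝ) := by
    have h1 : ∫⁻ ξ, Ψ ξ ^ (2:ℝ) = ∫⁻ ξ, ⨆ n, F n ξ ^ (2:ℝ) :=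
      lintegral_congr fun ξ => (hsup2 ξ).symm
    rw [h1, lintegral_iSup (fun n => (hFm n).pow measurable_const)
      (fun m n hmn ξ => ENNReal.rpow_le_rpow (hmono hmn ξ) (by norm_num))]
    exact iSup_le hln
  -- final assembly
  have hN2a : N2 a = eLpNorm f 2 volume := by
    rw [eLpNorm_congr_ae hfe, eLpNorm_eq_lintegral_rpow_enorm_toReal (by norm_num) (by norm_num)]
    simp [N2, ENNReal.toReal_ofNat]
    rfl
  have hN2b : N2 b = eLpNorm g 2 volume := by
    rw [eLpNorm_congr_ae hge, eLpNorm_eq_lintegral_rpow_enorm_toReal (by norm_num) (by norm_num)]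
    simp [N2, ENNReal.toReal_ofNat]
    rfl
  have hN2c : N2 c = eLpNorm h 2 volume := by
    rw [eLpNorm_congr_ae hhe, eLpNorm_eq_lintegral_rpow_enorm_toReal (by norm_num) (by norm_num)]
    simp [N2, ENNReal.toReal_ofNat]
    rfl
  have hTnorm : eLpNorm (T f g h) 2 volume
      = (∫⁻ ξ, (‖T f g h ξ‖₊ : ℝ≥0∞) ^ (2:ℝ)) ^ (1/2:ℝ) := by
    rw [eLpNorm_eq_lintegral_rpow_enorm_toReal (by norm_num) (by norm_num)]
    simp [ENNReal.toReal_ofNat]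
    rfl
  calc eLpNorm (T f g h) 2 volume
      = (∫⁻ ξ, (‖T f g h ξ‖₊ : ℝ≥0∞) ^ (2:ℝ)) ^ (1/2:ℝ) := hTnorm
    _ ≤ (∫⁻ ξ, Ψ ξ ^ (2:ℝ)) ^ (1/2:ℝ) := by
        apply ENNReal.rpow_le_rpow _ (by norm_num)
        exact lintegral_mono fun ξ => ENNReal.rpow_le_rpow (hpt ξ) (by norm_num)
    _ ≤ (P ^ (2:ℝ)) ^ (1/2:ℝ) := ENNReal.rpow_le_rpow hMCT (by norm_num)
    _ = P := rpow_sq_half P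
    _ = ENNReal.ofReal 2 * eLpNorm f 2 volume * eLpNorm g 2 volume * eLpNorm h 2 volume := by
        rw [hPdef, hN2a, hN2b, hN2c, ENNReal.ofReal_ofNat]
        ring
end
end

section
/- There exists ω₀ > 0 such that T(G, G, G) = ω₀ G, where G(x) = e^{−|x|²/2} and T(f,g,h)(ξ) = ∫_{−1}^{1} ∫_{ℝ²} f(ξ+x) conj(g(ξ+x+λx⊥)) h(ξ+λx⊥) dx dλ. Consequently, g(t,ξ) = e^{iω₀ t} e^{−|ξ|²/2} is an explicit solution of the continuous resonant equation −i ∂_t g = T(g,g,g). -/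
open MeasureTheory
noncomputable section

/-- The Gaussian G(x) = e^{-|x|²/2}. -/
def G (x : E2) : ℂ := Complex.exp (-(‖x‖ : ℂ)^2 / 2)

namespace CRaux

open Real

/-- `rot` as a linear map. -/
def rotL : E2 →ₗ[ℝ] E2 where
  toFun := rot
  map_add' a b := by ext i; fin_cases i <;> (simp [rot]; try ring)
  map_smul' c a := by ext i; fin_cases i <;> simp [rot, mul_comm]

/-- The shear map `x ↦ x + l • rot x`. -/
def LL (l : ℝ) : E2 →ₗ[ℝ] E2 := LinearMap.id + l • rotL

lemma det_LL (l : ℝ) : LinearMap.det (LL l) = 1 + l^2 := by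
  let b := (EuclideanSpace.basisFun (Fin 2) ℝ).toBasis
  rw [← LinearMap.det_toMatrix b, Matrix.det_fin_two]
  have h : ∀ i j : Fin 2, (LinearMap.toMatrix b b (LL l)) i j = b.repr (LL l (b j)) i :=
    fun i j => LinearMap.toMatrix_apply b b _ i j
  rw [h, h, h, h]
  have hb : ∀ j : Fin 2, b j = EuclideanSpace.single j 1 := by
    intro j; simp [b, EuclideanSpace.basisFun_apply]
  have hrepr : ∀ (x : E2) (i : Fin 2), b.repr x i = x i := by
    intro x i
    simp [b, OrthonormalBasis.coe_toBasis_repr_apply, EuclideanSpace.basisFun_repr]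
  simp only [hrepr, hb]
  simp [LL, rotL, rot, EuclideanSpace.single_apply]
  ring

/-- The shear map as a linear equivalence. -/
def Leq (l : ℝ) : E2 ≃ₗ[ℝ] E2 :=
  LinearEquiv.ofLinear (LL l) ((1 + l^2)⁻¹ • (LinearMap.id - l • rotL))
    (by
      have h : (1:ℝ) + l^2 ≠ 0 := by positivity
      ext x i
      fin_cases i <;> (simp [LL, rotL, rot]; field_simp; ring))
    (by
      have h : (1:ℝ) + l^2 ≠ 0 := by positivity
      ext x i
      fin_cases i <;> (simp [LL, rotL, rot]; field_simp; ring))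

lemma integral_comp_LL (l : ℝ) (f : E2 → ℝ) :
    ∫ x : E2, f (x + l • rot x) = (1 + l^2)⁻¹ * ∫ y : E2, f y := by
  have hdet : LinearMap.det (LL l) ≠ 0 := by rw [det_LL]; positivity
  have hmap := Measure.map_linearMap_addHaar_eq_smul_addHaar (volume : Measure E2) hdet
  let e : E2 ≃ₜ E2 := (Leq l).toContinuousLinearEquiv.toHomeomorph
  have h1 : ∫ x : E2, f (x + l • rot x) = ∫ y, f y ∂((volume : Measure E2).map (LL l)) := by
    have := MeasureTheory.integral_map_equiv (μ := (volume : Measure E2))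
      e.toMeasurableEquiv f
    rw [show (volume : Measure E2).map (LL l)
        = (volume : Measure E2).map e.toMeasurableEquiv from rfl]
    rw [this]; rfl
  rw [h1, hmap, integral_smul_measure, det_LL]
  rw [ENNReal.toReal_ofReal (by positivity)]
  rw [abs_of_pos (by positivity)]
  rfl

lemma gauss2 : ∫ v : E2, rexp (-‖v‖^2) = π := by
  have h := GaussianFourier.integral_rexp_neg_mul_sq_norm (V := E2) (b := 1) one_pos
  simp only [neg_mul, one_mul] at h
  rw [h]
  norm_num [finrank_euclideanSpace_fin]

lemma inner_rot (x : E2) (l : ℝ) : (inner ℝ x (l • rot x) : ℝ) = 0 := by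
  rw [real_inner_smul_right]
  have : (inner ℝ x (rot x) : ℝ) = 0 := by
    simp [PiLp.inner_apply, Fin.sum_univ_two, rot]; ring
  rw [this, mul_zero]

lemma norm_id (u a b : E2) (hab : (inner ℝ a b : ℝ) = 0) :
    ‖u+a‖^2 + ‖u+a+b‖^2 + ‖u+b‖^2 = ‖u‖^2 + 2*‖u+a+b‖^2 := by
  have h1 := norm_add_sq_real (u+a) b
  have h2 := norm_add_sq_real u a
  have h3 := norm_add_sq_real u b
  have h4 : (inner ℝ (u+a) b : ℝ) = inner ℝ u b + inner ℝ a b := inner_add_left u a b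
  nlinarith [h1, h2, h3, h4, hab]

lemma conj_G (x : E2) : (starRingEnd ℂ) (G x) = G x := by
  rw [G, ← Complex.exp_conj]
  congr 1
  simp [map_div₀, map_ofNat]

/-- Pointwise combination of the three Gaussians. -/
lemma key (ξ x : E2) (l : ℝ) :
    G (ξ + x) * (starRingEnd ℂ) (G (ξ + x + l • rot x)) * G (ξ + l • rot x)
      = G ξ * ((rexp (-(‖ξ + (x + l • rot x)‖^2)) : ℝ) : ℂ) := by
  rw [conj_G]
  rw [show G ξ * ((rexp (-(‖ξ + (x + l • rot x)‖^2)) : ℝ) : ℂ)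
      = G ξ * Complex.exp ((-(‖ξ + (x + l • rot x)‖^2) : ℝ) : ℂ) by
    rw [Complex.ofReal_exp]]
  rw [G, G, G, G, ← Complex.exp_add, ← Complex.exp_add, ← Complex.exp_add]
  congr 1
  have h := norm_id ξ x (l • rot x) (inner_rot x l)
  have hc : ((‖ξ+x‖^2 + ‖ξ+x+l•rot x‖^2 + ‖ξ+l•rot x‖^2 : ℝ) : ℂ)
      = ((‖ξ‖^2 + 2*‖ξ+x+l•rot x‖^2 : ℝ) : ℂ) := congrArg Complex.ofReal h
  push_cast at hc ⊢
  rw [show ξ + (x + l • rot x) = ξ + x + l • rot x from (add_assoc _ _ _).symm]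
  linear_combination (-(1:ℂ)/2) * hc

lemma inner_val (ξ : E2) (l : ℝ) :
    ∫ x : E2, rexp (-(‖ξ + (x + l • rot x)‖^2)) = (1+l^2)⁻¹ * π := by
  rw [integral_comp_LL l (fun y => rexp (-(‖ξ + y‖^2)))]
  rw [integral_add_left_eq_self (fun y => rexp (-(‖y‖^2))) ξ]
  simp only [gauss2]

lemma outer_val : ∫ l in Set.Icc (-1:ℝ) 1, ((1+l^2)⁻¹ * π) = π^2/2 := by
  rw [MeasureTheory.integral_Icc_eq_integral_Ioc,
    ← intervalIntegral.integral_of_le (by norm_num : (-1:ℝ) ≤ 1)]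
  rw [intervalIntegral.integral_mul_const]
  have : ∀ x : ℝ, (1+x^2)⁻¹ = 1/(1+x^2) := fun x => (one_div _).symm
  simp only [this]
  rw [integral_one_div_one_add_sq]
  rw [Real.arctan_one, Real.arctan_neg, Real.arctan_one]
  ring

lemma TGGG (ξ : E2) : T G G G ξ = ((π^2/2 : ℝ) : ℂ) * G ξ := by
  rw [T]
  have h1 : ∀ l : ℝ, (∫ x : E2,
      G (ξ + x) * (starRingEnd ℂ) (G (ξ + x + l • rot x)) * G (ξ + l • rot x))
      = G ξ * (((1+l^2)⁻¹ * π : ℝ) : ℂ) := by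
    intro l
    simp only [key ξ _ l]
    rw [integral_const_mul]
    have h2 : (∫ x : E2, ((rexp (-(‖ξ + (x + l • rot x)‖^2)) : ℝ) : ℂ))
        = (((1+l^2)⁻¹ * π : ℝ) : ℂ) := by
      rw [← inner_val ξ l]; exact integral_ofReal
    rw [h2]
  simp only [h1]
  rw [integral_const_mul]
  have h2 : (∫ l in Set.Icc (-1:ℝ) 1, (((1+l^2)⁻¹ * π : ℝ) : ℂ))
      = ((π^2/2 : ℝ) : ℂ) := by
    rw [← outer_val]; exact integral_ofReal
  rw [h2, mul_comm]

end CRaux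

/-- There is ω₀ > 0 with T(G,G,G) = ω₀G; consequently g(t,ξ) = e^{iω₀t}e^{-|ξ|²/2} solves the
continuous resonant equation -i∂_t g = T(g,g,g), i.e. ∂_t g = i·T(g,g,g). -/
theorem stmt12 :
    ∃ ω₀ : ℝ, 0 < ω₀ ∧ (∀ ξ : E2, T G G G ξ = (ω₀ : ℂ) * G ξ) ∧
      ∀ (t : ℝ) (ξ : E2),
        HasDerivAt (fun s : ℝ => Complex.exp (Complex.I * (ω₀ : ℂ) * (s : ℂ)) * G ξ)
          (Complex.I *
            T (fun η => Complex.exp (Complex.I * (ω₀ : ℂ) * (t : ℂ)) * G η)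
              (fun η => Complex.exp (Complex.I * (ω₀ : ℂ) * (t : ℂ)) * G η)
              (fun η => Complex.exp (Complex.I * (ω₀ : ℂ) * (t : ℂ)) * G η) ξ) t := by
  refine ⟨Real.pi^2/2, by positivity, CRaux.TGGG, ?_⟩
  intro t ξ
  set ω : ℝ := Real.pi^2/2 with hω
  set c : ℂ := Complex.exp (Complex.I * (ω : ℂ) * (t : ℂ)) with hc
  have hcc : c * (starRingEnd ℂ) c = 1 := by
    rw [hc, ← Complex.exp_conj, ← Complex.exp_add]
    simp only [map_mul, Complex.conj_I, Complex.conj_ofReal]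
    rw [show Complex.I * (ω:ℂ) * (t:ℂ) + -Complex.I * (ω:ℂ) * (t:ℂ) = 0 by ring,
      Complex.exp_zero]
  have hT : T (fun η => c * G η) (fun η => c * G η) (fun η => c * G η) ξ
      = c * ((ω : ℂ) * G ξ) := by
    rw [T]
    have hpt : ∀ (l : ℝ) (x : E2),
        (c * G (ξ + x)) * (starRingEnd ℂ) (c * G (ξ + x + l • rot x)) * (c * G (ξ + l • rot x))
        = c * (G (ξ + x) * (starRingEnd ℂ) (G (ξ + x + l • rot x)) * G (ξ + l • rot x)) := by
      intro l x
      rw [map_mul]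
      linear_combination (G (ξ + x) * (starRingEnd ℂ) (G (ξ + x + l • rot x))
        * G (ξ + l • rot x) * c) * hcc
    simp only [hpt]
    simp only [integral_const_mul]
    rw [show (∫ l in Set.Icc (-1:ℝ) 1, ∫ x : E2,
        G (ξ + x) * (starRingEnd ℂ) (G (ξ + x + l • rot x)) * G (ξ + l • rot x)) = T G G G ξ
      from rfl]
    rw [CRaux.TGGG ξ]
  rw [hT]
  have h0 : HasDerivAt (fun s : ℝ => (s : ℂ)) 1 t := by
    exact Complex.ofRealCLM.hasDerivAt (x := t)
  have h1 := ((h0.const_mul (Complex.I * (ω:ℂ))).cexp).mul_const (G ξ)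
  convert h1 using 1
  · rfl
  rw [← hc]
  ring
end
end
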